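/- Let λ be a partition of N with conjugate λ* = (1^{r_1},...,h^{r_h}) in exponential notation, and suppose r_i = r_{i+1} = 2 and r_j = r_{j+1} = 2 for indices i < j (with i+1 < j). Then the exponent vector with r'_{i−1} = r_{i−1}+2, r'_i = r_i−2, r'_{j+1} = r_{j+1}−2, r'_{j+2} = r_{j+2}+2 and all other entries unchanged defines (as conjugate of) a partition μ of N which is strictly smaller than λ in the dominance order. -/

import Mathlib

open Finset

private lemma auxmin (l a : ℕ) (c : ℤ) :
    ∑ j' ∈ Icc 1 l, (if j' ≤ a then c else 0) = (min l a : ℕ) * c := by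
  induction l with
  | zero => simp
  | succ n ih =>
    rw [Finset.sum_Icc_succ_top (by omega : 1 ≤ n + 1), ih]
    rcases le_or_gt (n + 1) a with h | h
    · rw [if_pos h]
      have h1 : min (n + 1) a = n + 1 := by omega
      have h2 : min n a = n := by omega
      rw [h1, h2]; push_cast; ring
    · rw [if_neg (by omega)]
      have h1 : min (n + 1) a = min n a := by omega
      rw [h1]; ring

theorem stmt10 (N H : ℕ) (r : ℕ → ℕ) (i j : ℕ) (hi : 1 ≤ i) (hij : i + 1 < j)
    (hjH : j + 2 ≤ H)
    (hr0 : r 0 = 0) (hsupp : ∀ k, H < k → r k = 0)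
    (hsum : ∑ k ∈ Icc 1 H, k * r k = N)
    (hri : r i = 2) (hri1 : r (i + 1) = 2) (hrj : r j = 2) (hrj1 : r (j + 1) = 2)
    (r' : ℕ → ℕ)
    (hr' : r' = fun k => if k = i - 1 then r (i - 1) + 2 else if k = i then r i - 2
      else if k = j + 1 then r (j + 1) - 2 else if k = j + 2 then r (j + 2) + 2 else r k) :
    (∑ k ∈ Icc 1 H, k * r' k = N) ∧
    (∀ l, ∑ j' ∈ Icc 1 l, (∑ k ∈ Icc j' H, r' k) ≤ ∑ j' ∈ Icc 1 l, (∑ k ∈ Icc j' H, r k)) ∧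
    (∃ j', 1 ≤ j' ∧ (∑ k ∈ Icc j' H, r' k) ≠ (∑ k ∈ Icc j' H, r k)) := by
  have hδ : ∀ k, (r' k : ℤ) = (r k : ℤ) +
      ((if k = i - 1 then 2 else 0) + (if k = i then -2 else 0) +
       (if k = j + 1 then -2 else 0) + (if k = j + 2 then 2 else 0)) := by
    intro k
    simp only [hr']
    split_ifs <;> subst_vars <;> push_cast <;> omega
  -- sum of r' over any finset
  have hsplit : ∀ s : Finset ℕ, ∑ k ∈ s, (r' k : ℤ) = (∑ k ∈ s, (r k : ℤ)) +
      ((if i - 1 ∈ s then 2 else 0) + (if i ∈ s then -2 else 0) +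
       (if j + 1 ∈ s then -2 else 0) + (if j + 2 ∈ s then 2 else 0)) := by
    intro s
    simp only [hδ, Finset.sum_add_distrib, Finset.sum_ite_eq']
  constructor
  · -- weighted sum preserved
    have h1 : (∑ k ∈ Icc 1 H, (k : ℤ) * r' k) = (∑ k ∈ Icc 1 H, (k : ℤ) * r k) := by
      have : ∀ k : ℕ, (k : ℤ) * r' k = (k : ℤ) * r k +
          ((if k = i - 1 then (k : ℤ) * 2 else 0) + (if k = i then (k : ℤ) * (-2) else 0) +
           (if k = j + 1 then (k : ℤ) * (-2) else 0) + (if k = j + 2 then (k : ℤ) * 2 else 0)) := by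
        intro k
        rw [hδ k]
        split_ifs <;> ring
      rw [Finset.sum_congr rfl (fun k _ => this k)]
      simp only [Finset.sum_add_distrib, Finset.sum_ite_eq', Finset.mem_Icc]
      split_ifs <;> push_cast <;> omega
    rw [← hsum]
    have : (∑ k ∈ Icc 1 H, (k * r' k : ℕ) : ℤ) = (∑ k ∈ Icc 1 H, (k * r k : ℕ) : ℤ) := by
      push_cast; exact h1
    exact_mod_cast this
  constructor
  · intro l
    have key : (∑ j' ∈ Icc 1 l, ∑ k ∈ Icc j' H, (r' k : ℤ)) ≤
        (∑ j' ∈ Icc 1 l, ∑ k ∈ Icc j' H, (r k : ℤ)) := by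
      have hrw : ∀ j' : ℕ, ∑ k ∈ Icc j' H, (r' k : ℤ) = (∑ k ∈ Icc j' H, (r k : ℤ)) +
          ((if j' ≤ i - 1 then 2 else 0) + (if j' ≤ i then -2 else 0) +
           (if j' ≤ j + 1 then -2 else 0) + (if j' ≤ j + 2 then 2 else 0)) := by
        intro j'
        rw [hsplit]
        have h1 : i - 1 ≤ H := by omega
        have h2 : i ≤ H := by omega
        have h3 : j + 1 ≤ H := by omega
        have h4 : j + 2 ≤ H := by omega
        simp [Finset.mem_Icc, h1, h2, h3, h4]
      rw [Finset.sum_congr rfl (fun j' _ => hrw j')]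
      rw [Finset.sum_add_distrib, Finset.sum_add_distrib, Finset.sum_add_distrib,
        Finset.sum_add_distrib, auxmin, auxmin, auxmin, auxmin]
      have hm1 : min l (i - 1) ≤ min l i := by omega
      have hm2 : min l (j + 2) ≤ min l (j + 1) + 1 := by omega
      have hm3 : min l (j + 2) = min l (j + 1) + 1 → min l (i - 1) + 1 ≤ min l i := by omega
      push_cast
      omega
    have : (∑ j' ∈ Icc 1 l, (∑ k ∈ Icc j' H, r' k : ℕ) : ℤ) ≤
        (∑ j' ∈ Icc 1 l, (∑ k ∈ Icc j' H, r k : ℕ) : ℤ) := by push_cast; exact key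
    exact_mod_cast this
  · refine ⟨i, hi, fun h => ?_⟩
    have h1 := hsplit (Icc i H)
    have hmem1 : i - 1 ∉ Icc i H := by simp [Finset.mem_Icc]; omega
    have hmem2 : i ∈ Icc i H := by simp [Finset.mem_Icc]; omega
    have hmem3 : j + 1 ∈ Icc i H := by simp [Finset.mem_Icc]; omega
    have hmem4 : j + 2 ∈ Icc i H := by simp [Finset.mem_Icc]; omega
    rw [if_neg hmem1, if_pos hmem2, if_pos hmem3, if_pos hmem4] at h1
    have hc : (∑ k ∈ Icc i H, (r' k : ℤ)) = (∑ k ∈ Icc i H, (r k : ℤ)) := by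
      have := congrArg (fun n : ℕ => (n : ℤ)) h
      push_cast at this
      simpa using this
    omega
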